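/- For every comeager subset C of (0,1)^ℕ (with the product topology) there exist s, t ∈ C such that the sequence (|s n − t n|)_n converges neither to 0 nor to 1. -/

import Mathlib

open Filter Set Topology

private abbrev XX := ℕ → Set.Ioo (0:ℝ) 1

private lemma aux_nd (N : ℕ) (p : ℕ → Set.Ioo (0:ℝ) 1 → Prop)
    (hcl : ∀ n, IsClosed {v | p n v})
    (hne : ∀ n, ∃ v, ¬ p n v) :
    IsNowhereDense {t : XX | ∀ n, N ≤ n → p n (t n)} := by
  have hclosed : IsClosed {t : XX | ∀ n, N ≤ n → p n (t n)} := by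
    have : {t : XX | ∀ n, N ≤ n → p n (t n)}
        = ⋂ n, ⋂ (_ : N ≤ n), (fun t : XX => t n) ⁻¹' {v | p n v} := by
      ext t; simp [Set.mem_iInter]
    rw [this]
    exact isClosed_iInter fun n => isClosed_iInter fun _ =>
      (hcl n).preimage (continuous_apply n)
  rw [hclosed.isNowhereDense_iff, interior_eq_empty_iff_dense_compl]
  rw [dense_iff_inter_open]
  intro U hU ⟨x, hx⟩
  obtain ⟨I, u, h1, h2⟩ := isOpen_pi_iff.mp hU x hx
  set n0 : ℕ := max N (I.sup id + 1) with hn0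
  have hn0I : n0 ∉ I := by
    intro h
    have : n0 ≤ I.sup id := Finset.le_sup (f := id) h
    have : I.sup id + 1 ≤ n0 := le_max_right _ _
    omega
  obtain ⟨v, hv⟩ := hne n0
  refine ⟨Function.update x n0 v, ?_, ?_⟩
  · apply h2
    intro i hi
    rw [Function.update_of_ne (by rintro rfl; exact hn0I hi)]
    exact (h1 i hi).2
  · intro h
    exact hv (by simpa [Function.update_self] using h n0 (le_max_left _ _))

private lemma aux_meagre (s : XX) (p : ℕ → Set.Ioo (0:ℝ) 1 → Prop)
    (hcl : ∀ n, IsClosed {v | p n v})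
    (hne : ∀ n, ∃ v, ¬ p n v)
    {A : Set XX} (hA : ∀ t ∈ A, ∃ N, ∀ n, N ≤ n → p n (t n)) :
    IsMeagre A := by
  have : A ⊆ ⋃ N : ℕ, {t : XX | ∀ n, N ≤ n → p n (t n)} := by
    intro t ht
    obtain ⟨N, hN⟩ := hA t ht
    exact mem_iUnion.mpr ⟨N, hN⟩
  refine IsMeagre.mono this ?_
  exact isMeagre_iUnion fun N => by
    rw [isMeagre_iff_countable_union_isNowhereDense]
    exact ⟨{{t : XX | ∀ n, N ≤ n → p n (t n)}}, by
      simpa using aux_nd N p hcl hne, countable_singleton _, by simp⟩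

theorem stmt_7 (C : Set (ℕ → Set.Ioo (0 : ℝ) 1))
    (hC : C ∈ residual (ℕ → Set.Ioo (0 : ℝ) 1)) :
    ∃ s ∈ C, ∃ t ∈ C,
      ¬ Filter.Tendsto (fun n => |(s n : ℝ) - (t n : ℝ)|) Filter.atTop (nhds 0) ∧
      ¬ Filter.Tendsto (fun n => |(s n : ℝ) - (t n : ℝ)|) Filter.atTop (nhds 1) := by
  haveI hIoo : PolishSpace (Set.Ioo (0:ℝ) 1) := isOpen_Ioo.polishSpace
  letI m := TopologicalSpace.upgradeIsCompletelyMetrizable XX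
  haveI : BaireSpace XX :=
    BaireSpace.of_completelyPseudoMetrizable
  have hdense := dense_of_mem_residual hC
  have hhalf : (1:ℝ)/2 ∈ Set.Ioo (0:ℝ) 1 := by norm_num
  haveI : Nonempty XX := ⟨fun _ => (⟨1/2, hhalf⟩ : Set.Ioo (0:ℝ) 1)⟩
  obtain ⟨s, hs⟩ := hdense.nonempty
  -- meagre set of t tending to 0
  have hM0 : IsMeagre {t : XX | Tendsto (fun n => |(s n : ℝ) - (t n : ℝ)|) atTop (nhds 0)} := by
    refine aux_meagre s (fun n v => |(s n : ℝ) - (v : ℝ)| ≤ 1/4) ?_ ?_ ?_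
    · intro n
      exact (isClosed_Iic (a := (1:ℝ)/4)).preimage
        ((continuous_const.sub continuous_subtype_val).abs)
    · intro n
      rcases le_or_gt (1/2 : ℝ) (s n) with h | h
      · refine ⟨⟨1/8, by norm_num⟩, ?_⟩
        simp only [not_le]
        show (1:ℝ)/4 < |(s n : ℝ) - 1/8|
        calc (1:ℝ)/4 < (s n : ℝ) - 1/8 := by linarith
          _ ≤ |(s n : ℝ) - 1/8| := le_abs_self _
      · refine ⟨⟨7/8, by norm_num⟩, ?_⟩
        simp only [not_le]
        show (1:ℝ)/4 < |(s n : ℝ) - 7/8|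
        calc (1:ℝ)/4 < 7/8 - (s n : ℝ) := by linarith
          _ ≤ |(s n : ℝ) - 7/8| := by rw [abs_sub_comm]; exact le_abs_self _
    · intro t ht
      obtain ⟨N, hN⟩ := (Metric.tendsto_atTop.mp ht) (1/4) (by norm_num)
      refine ⟨N, fun n hn => ?_⟩
      have := hN n hn
      rw [Real.dist_eq, sub_zero, abs_abs] at this
      linarith
  have hM1 : IsMeagre {t : XX | Tendsto (fun n => |(s n : ℝ) - (t n : ℝ)|) atTop (nhds 1)} := by
    refine aux_meagre s (fun n v => 3/4 ≤ |(s n : ℝ) - (v : ℝ)|) ?_ ?_ ?_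
    · intro n
      exact (isClosed_Ici (a := (3:ℝ)/4)).preimage
        ((continuous_const.sub continuous_subtype_val).abs)
    · intro n
      exact ⟨s n, by norm_num⟩
    · intro t ht
      obtain ⟨N, hN⟩ := (Metric.tendsto_atTop.mp ht) (1/4) (by norm_num)
      refine ⟨N, fun n hn => ?_⟩
      have := hN n hn
      rw [Real.dist_eq] at this
      have h2 : 1 - |(s n : ℝ) - (t n : ℝ)| ≤ |(|(s n : ℝ) - (t n : ℝ)|) - 1| :=
        calc 1 - |(s n : ℝ) - (t n : ℝ)| ≤ abs (1 - |(s n : ℝ) - (t n : ℝ)|) := le_abs_self _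
          _ = |(|(s n : ℝ) - (t n : ℝ)|) - 1| := abs_sub_comm _ _
      linarith
  have hC' : (C ∩ {t : XX | Tendsto (fun n => |(s n : ℝ) - (t n : ℝ)|) atTop (nhds 0)}ᶜ
      ∩ {t : XX | Tendsto (fun n => |(s n : ℝ) - (t n : ℝ)|) atTop (nhds 1)}ᶜ)
      ∈ residual XX := by
    exact inter_mem (inter_mem hC hM0) hM1
  obtain ⟨t, ⟨⟨htC, ht0⟩, ht1⟩⟩ := (dense_of_mem_residual hC').nonempty
  exact ⟨s, hs, t, htC, ht0, ht1⟩
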